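/- For every even integer n ≥ 6 there exist Boolean bent functions f, f' : 𝔽₂ⁿ → 𝔽₂ which are not extended-affine equivalent, but whose translation designs dev(G_f) and dev(G_{f'}) are isomorphic, i.e. there exist bijections Π, Σ : 𝔽₂ⁿ × 𝔽₂ → 𝔽₂ⁿ × 𝔽₂ such that for all p = (x,u), q = (y,v), writing Π(p) = (x',u') and Σ(q) = (y',v'), one has f(x' ⊕ y') = u' ⊕ v' if and only if f'(x ⊕ y) = u ⊕ v. -/
import Mathlib


open Finset Function

/-- The vector space `𝔽₂ⁿ`. -/
abbrev BV (n : ℕ) := Fin n → ZMod 2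

/-- The standard dot product `⟨u,v⟩ = Σᵢ uᵢ vᵢ` on `𝔽₂ⁿ`. -/
def bdot {n : ℕ} (u v : BV n) : ZMod 2 := ∑ i, u i * v i

/-- The Walsh coefficient `W_f(a) = Σ_x (−1)^{f(x) ⊕ ⟨a,x⟩}` of a Boolean function. -/
def walshB {n : ℕ} (f : BV n → ZMod 2) (a : BV n) : ℤ :=
  ∑ x : BV n, (-1 : ℤ) ^ ((f x + bdot a x).val)

/-- A Boolean function on `𝔽₂ⁿ` is bent if all its Walsh coefficients equal `±2^{n/2}`. -/
def IsBentB {n : ℕ} (f : BV n → ZMod 2) : Prop :=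
  ∀ a : BV n, walshB f a = 2 ^ (n / 2) ∨ walshB f a = -2 ^ (n / 2)

/-- A map `𝔽₂ⁿ → 𝔽₂ⁿ` is affine if it is a linear map followed by a translation. -/
def IsAffineF {n : ℕ} (A : BV n → BV n) : Prop :=
  ∃ (L : BV n →ₗ[ZMod 2] BV n) (t : BV n), ∀ x, A x = L x + t

/-- A map `𝔽₂ⁿ → 𝔽₂` is affine if it is a linear form plus a constant. -/
def IsAffineB {n : ℕ} (A : BV n → ZMod 2) : Prop :=
  ∃ (L : BV n →ₗ[ZMod 2] ZMod 2) (c : ZMod 2), ∀ x, A x = L x + c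

/-- Extended-affine equivalence of Boolean functions: `f = f' ∘ A₂ + A₃` with `A₂` an
affine automorphism of `𝔽₂ⁿ` and `A₃` affine (the only linear automorphism `A₁` of `𝔽₂`
is the identity). -/
def EAequivB {n : ℕ} (f f' : BV n → ZMod 2) : Prop :=
  ∃ (A₂ : BV n → BV n) (A₃ : BV n → ZMod 2),
    IsAffineF A₂ ∧ Bijective A₂ ∧ IsAffineB A₃ ∧
    ∀ x, f x = f' (A₂ x) + A₃ x

set_option maxRecDepth 100000


namespace BentAux

def lpart {p m : ℕ} (z : BV (p + m)) : BV p := fun i => z (Fin.castAdd m i)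
def rpart {p m : ℕ} (z : BV (p + m)) : BV m := fun j => z (Fin.natAdd p j)

@[simp] lemma lpart_add {p m : ℕ} (x y : BV (p + m)) :
    lpart (x + y) = lpart x + lpart y := rfl
@[simp] lemma rpart_add {p m : ℕ} (x y : BV (p + m)) :
    rpart (x + y) = rpart x + rpart y := rfl
@[simp] lemma lpart_append {p m : ℕ} (u : BV p) (v : BV m) :
    lpart (Fin.append u v) = u := by
  funext i; exact Fin.append_left u v i
@[simp] lemma rpart_append {p m : ℕ} (u : BV p) (v : BV m) :
    rpart (Fin.append u v) = v := by
  funext j; exact Fin.append_right u v j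
lemma append_lr {p m : ℕ} (z : BV (p + m)) : Fin.append (lpart z) (rpart z) = z := by
  funext i
  refine Fin.addCases (fun j => ?_) (fun j => ?_) i
  · rw [Fin.append_left]; rfl
  · rw [Fin.append_right]; rfl

/-- direct sum of two Boolean functions -/
def join {p m : ℕ} (g₁ : BV p → ZMod 2) (g₂ : BV m → ZMod 2) : BV (p + m) → ZMod 2 :=
  fun z => g₁ (lpart z) + g₂ (rpart z)

def splitE (p m : ℕ) : BV (p + m) ≃ BV p × BV m where
  toFun z := (lpart z, rpart z)
  invFun w := Fin.append w.1 w.2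
  left_inv z := append_lr z
  right_inv w := by cases w; simp

lemma chi_add : ∀ c d : ZMod 2,
    ((-1 : ℤ)) ^ ((c + d).val) = (-1 : ℤ) ^ c.val * (-1 : ℤ) ^ d.val := by decide

lemma bdot_append {p m : ℕ} (a : BV (p + m)) (u : BV p) (v : BV m) :
    bdot a (Fin.append u v) = bdot (lpart a) u + bdot (rpart a) v := by
  unfold bdot
  rw [Fin.sum_univ_add]
  simp [lpart, rpart]

lemma walsh_join {p m : ℕ} (g₁ : BV p → ZMod 2) (g₂ : BV m → ZMod 2) (a : BV (p + m)) :
    walshB (join g₁ g₂) a = walshB g₁ (lpart a) * walshB g₂ (rpart a) := by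
  unfold walshB
  rw [← Equiv.sum_comp (splitE p m).symm
    (fun x => (-1 : ℤ) ^ ((join g₁ g₂ x + bdot a x).val))]
  rw [Fintype.sum_prod_type]
  rw [Finset.sum_mul_sum]
  refine Finset.sum_congr rfl fun y _ => Finset.sum_congr rfl fun z _ => ?_
  have h1 : join g₁ g₂ ((splitE p m).symm (y, z)) + bdot a ((splitE p m).symm (y, z)) =
      (g₁ y + bdot (lpart a) y) + (g₂ z + bdot (rpart a) z) := by
    show join g₁ g₂ (Fin.append y z) + bdot a (Fin.append y z) = _
    rw [bdot_append]
    unfold join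
    rw [lpart_append, rpart_append]
    ring
  rw [h1, chi_add]

lemma bent_join {p m : ℕ} (hp : Even p) (hm : Even m) {g₁ : BV p → ZMod 2}
    {g₂ : BV m → ZMod 2} (h₁ : IsBentB g₁) (h₂ : IsBentB g₂) : IsBentB (join g₁ g₂) := by
  intro a
  have hsplit : (p + m) / 2 = p / 2 + m / 2 := by
    obtain ⟨u, rfl⟩ := hp; obtain ⟨v, rfl⟩ := hm; omega
  rw [walsh_join, hsplit, pow_add]
  rcases h₁ (lpart a) with h1 | h1 <;> rcases h₂ (rpart a) with h2 | h2
  · left; rw [h1, h2]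
  · right; rw [h1, h2]; ring
  · right; rw [h1, h2]; ring
  · left; rw [h1, h2]; ring

end BentAux

namespace BentAux

/-- third discrete derivative (sum over a 3-dim parallelepiped) -/
def d3 {n : ℕ} (f : BV n → ZMod 2) (a b c x : BV n) : ZMod 2 :=
  f x + f (x + a) + f (x + b) + f (x + c) + f (x + a + b) + f (x + a + c) +
    f (x + b + c) + f (x + a + b + c)

lemma d3_join {p m : ℕ} (g₁ : BV p → ZMod 2) (g₂ : BV m → ZMod 2) (a b c x : BV (p + m)) :
    d3 (join g₁ g₂) a b c x =
      d3 g₁ (lpart a) (lpart b) (lpart c) (lpart x) +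
        d3 g₂ (rpart a) (rpart b) (rpart c) (rpart x) := by
  simp only [d3, join, lpart_add, rpart_add]
  ring

def q2 : BV 2 → ZMod 2 := fun x => x 0 * x 1

lemma q2_bent : IsBentB q2 := by unfold IsBentB; decide

lemma q2_d3 : ∀ a b c x : BV 2, d3 q2 a b c x = 0 := by decide

lemma Qex : ∀ k m : ℕ, m = k + k →
    ∃ q : BV m → ZMod 2, IsBentB q ∧ ∀ a b c x, d3 q a b c x = 0 := by
  intro k
  induction k with
  | zero =>
    intro m hm; subst hm
    refine ⟨fun _ => 0, by unfold IsBentB; decide, fun a b c x => by simp [d3]⟩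
  | succ k ih =>
    intro m hm
    have h2 : m = 2 + (k + k) := by omega
    subst h2
    obtain ⟨q', hb', hd'⟩ := ih (k + k) rfl
    refine ⟨join q2 q', bent_join ⟨1, rfl⟩ ⟨k, rfl⟩ q2_bent hb', fun a b c x => ?_⟩
    rw [d3_join, hd', q2_d3, add_zero]

end BentAux

namespace BentAux

/-- the EA-invariant: number of triples `(a,b,c)` whose third derivative is constant `1` -/
def Kinv {n : ℕ} (f : BV n → ZMod 2) : ℕ :=
  (Finset.univ.filter fun t : BV n × BV n × BV n => ∀ x, d3 f t.1 t.2.1 t.2.2 x = 1).card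

lemma d3_addf {n : ℕ} (g h : BV n → ZMod 2) (a b c x : BV n) :
    d3 (fun z => g z + h z) a b c x = d3 g a b c x + d3 h a b c x := by
  simp only [d3]; ring

lemma scalar8 : ∀ lx la lb lc cc : ZMod 2,
    (lx + cc) + ((lx + la) + cc) + ((lx + lb) + cc) + ((lx + lc) + cc) +
      ((lx + la + lb) + cc) + ((lx + la + lc) + cc) + ((lx + lb + lc) + cc) +
      ((lx + la + lb + lc) + cc) = 0 := by decide

lemma d3_A3 {n : ℕ} (ℓ : BV n →ₗ[ZMod 2] ZMod 2) (cc : ZMod 2) (a b c x : BV n) :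
    d3 (fun z => ℓ z + cc) a b c x = 0 := by
  simp only [d3, map_add]
  linear_combination scalar8 (ℓ x) (ℓ a) (ℓ b) (ℓ c) cc

lemma d3_comp {n : ℕ} (f' : BV n → ZMod 2) (A₂ : BV n → BV n)
    (L : BV n →ₗ[ZMod 2] BV n) (t : BV n) (hA2 : ∀ x, A₂ x = L x + t) (a b c x : BV n) :
    d3 (fun z => f' (A₂ z)) a b c x = d3 f' (L a) (L b) (L c) (A₂ x) := by
  have harg : ∀ z w, A₂ (z + w) = A₂ z + L w := by
    intro z w; rw [hA2, hA2, map_add]; abel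
  simp only [d3, harg]

lemma EA_Kinv {n : ℕ} {f f' : BV n → ZMod 2} (h : EAequivB f f') : Kinv f = Kinv f' := by
  obtain ⟨A₂, A₃, ⟨L, t, hA2⟩, hbij, ⟨ℓ, cc, hA3⟩, heq⟩ := h
  have ht : ∀ v : BV n, v + t + t = v := by
    intro v; funext i
    show (v i + t i) + t i = v i
    have h2 : ∀ a b : ZMod 2, a + b + b = a := by decide
    exact h2 _ _
  have hL : ⇑L = fun x => A₂ x + t := by
    funext x; rw [hA2]; exact (ht (L x)).symm
  have hLbij : Function.Bijective (⇑L) := by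
    rw [hL]; exact (Equiv.addRight t).bijective.comp hbij
  have key : ∀ a b c x, d3 f a b c x = d3 f' (L a) (L b) (L c) (A₂ x) := by
    intro a b c x
    have hf : f = fun z => (fun w => f' (A₂ w)) z + (fun w => ℓ w + cc) z := by
      funext z; rw [heq z, hA3 z]
    rw [hf, d3_addf, d3_A3, add_zero, d3_comp f' A₂ L t hA2]
  have cond : ∀ a b c : BV n,
      (∀ x, d3 f a b c x = 1) ↔ (∀ x, d3 f' (L a) (L b) (L c) x = 1) := by
    intro a b c
    constructor
    · intro H x
      obtain ⟨y, rfl⟩ := hbij.2 x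
      rw [← key]; exact H y
    · intro H x; rw [key]; exact H (A₂ x)
  unfold Kinv
  refine Finset.card_equiv ((Equiv.ofBijective _ hLbij).prodCongr
    ((Equiv.ofBijective _ hLbij).prodCongr (Equiv.ofBijective _ hLbij))) ?_
  rintro ⟨a, b, c⟩
  simp only [Finset.mem_filter, Finset.mem_univ, true_and, Equiv.prodCongr_apply, Prod.map,
    Equiv.ofBijective_apply]
  exact cond a b c

end BentAux

namespace BentAux

/-- the cubic bent function `x₀x₁x₂ + x₀x₃ + x₁x₄ + x₂x₅` on `𝔽₂⁶` -/
def f0 : BV 6 → ZMod 2 := fun x => x 0 * x 1 * x 2 + x 0 * x 3 + x 1 * x 4 + x 2 * x 5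
/-- the quadratic bent function `x₀x₃ + x₁x₄ + x₂x₅` on `𝔽₂⁶` -/
def q6 : BV 6 → ZMod 2 := fun x => x 0 * x 3 + x 1 * x 4 + x 2 * x 5
/-- the nonlinear involution realizing the design isomorphism -/
def lam : BV 6 → BV 6 := fun x =>
  ![x 0, x 1, x 2, x 3 + x 1 * x 2, x 4 + x 0 * x 2, x 5 + x 0 * x 1]
def s6 : BV 6 → ZMod 2 := fun x => f0 (lam x) + q6 x

lemma f0_bent : IsBentB f0 := by unfold IsBentB; decide
lemma q6_bent : IsBentB q6 := by unfold IsBentB; decide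
lemma lam_invol : ∀ x : BV 6, lam (lam x) = x := by decide
lemma design6 : ∀ u v : BV 6, f0 (lam u + lam v) = q6 (u + v) + s6 u + s6 v := by decide
lemma cert : ∀ x : BV 6,
    d3 f0 ![1,0,0,0,0,0] ![0,1,0,0,0,0] ![0,0,1,0,0,0] x = 1 := by decide

lemma d3_mono8 : ∀ xi xj ai aj bi bj ci cj : ZMod 2,
    xi * xj + (xi + ai) * (xj + aj) + (xi + bi) * (xj + bj) + (xi + ci) * (xj + cj) +
      (xi + ai + bi) * (xj + aj + bj) + (xi + ai + ci) * (xj + aj + cj) +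
      (xi + bi + ci) * (xj + bj + cj) + (xi + ai + bi + ci) * (xj + aj + bj + cj) = 0 := by
  decide

lemma q6_d3 (a b c x : BV 6) : d3 q6 a b c x = 0 := by
  simp only [d3, q6, Pi.add_apply]
  linear_combination d3_mono8 (x 0) (x 3) (a 0) (a 3) (b 0) (b 3) (c 0) (c 3) +
    d3_mono8 (x 1) (x 4) (a 1) (a 4) (b 1) (b 4) (c 1) (c 4) +
    d3_mono8 (x 2) (x 5) (a 2) (a 5) (b 2) (b 5) (c 2) (c 5)

def bigLam {m : ℕ} (z : BV (6 + m)) : BV (6 + m) := Fin.append (lam (lpart z)) (rpart z)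

lemma lpart_bigLam {m : ℕ} (z : BV (6 + m)) : lpart (bigLam z) = lam (lpart z) :=
  lpart_append _ _
lemma rpart_bigLam {m : ℕ} (z : BV (6 + m)) : rpart (bigLam z) = rpart z :=
  rpart_append _ _
lemma bigLam_invol {m : ℕ} (z : BV (6 + m)) : bigLam (bigLam z) = z := by
  unfold bigLam
  rw [lpart_append, rpart_append, lam_invol, append_lr]

def bigP {m : ℕ} (p : BV (6 + m) × ZMod 2) : BV (6 + m) × ZMod 2 :=
  (bigLam p.1, p.2 + s6 (lpart p.1))

lemma bigP_bij {m : ℕ} : Function.Bijective (bigP (m := m)) := by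
  have h1 : Function.Involutive
      (fun p : BV (6 + m) × ZMod 2 => (p.1, p.2 + s6 (lpart p.1))) := by
    intro p
    have h2 : ∀ a b : ZMod 2, a + b + b = a := by decide
    exact Prod.ext rfl (h2 p.2 (s6 (lpart p.1)))
  have h2 : Function.Involutive
      (fun p : BV (6 + m) × ZMod 2 => (bigLam p.1, p.2)) := by
    intro p; exact Prod.ext (bigLam_invol p.1) rfl
  have hcomp : bigP (m := m) = (fun p : BV (6 + m) × ZMod 2 => (bigLam p.1, p.2)) ∘
      (fun p : BV (6 + m) × ZMod 2 => (p.1, p.2 + s6 (lpart p.1))) := rfl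
  rw [hcomp]
  exact h2.bijective.comp h1.bijective

lemma scalarIff : ∀ A u v s s' : ZMod 2, (A + s + s' = (u + s) + (v + s')) ↔ A = u + v := by
  decide

lemma join_bigLam {m : ℕ} (qm : BV m → ZMod 2) (z w : BV (6 + m)) :
    join f0 qm (bigLam z + bigLam w) =
      join q6 qm (z + w) + s6 (lpart z) + s6 (lpart w) := by
  unfold join
  rw [lpart_add, rpart_add, lpart_bigLam, lpart_bigLam, rpart_bigLam, rpart_bigLam,
    design6 (lpart z) (lpart w), lpart_add, rpart_add]
  ring

end BentAux


/-- For every even `n ≥ 6` there exist Boolean bent functions on `𝔽₂ⁿ` which are not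
extended-affine equivalent but whose translation designs `dev(G_f)` and `dev(G_{f'})`
are isomorphic. -/
theorem exists_inequivalent_isomorphic_boolean_bent
    (n : ℕ) (hn : 6 ≤ n) (hev : Even n) :
    ∃ f f' : BV n → ZMod 2, IsBentB f ∧ IsBentB f' ∧ ¬ EAequivB f f' ∧
      ∃ P S : BV n × ZMod 2 → BV n × ZMod 2, Bijective P ∧ Bijective S ∧
        ∀ p q : BV n × ZMod 2,
          (f ((P p).1 + (S q).1) = (P p).2 + (S q).2) ↔
            (f' (p.1 + q.1) = p.2 + q.2) := by
  obtain ⟨m, rfl⟩ := Nat.exists_eq_add_of_le hn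
  have hmE : Even m := by rcases hev with ⟨t, ht⟩; exact ⟨t - 3, by omega⟩
  obtain ⟨k, hk⟩ := hmE
  obtain ⟨qm, qmb, qmd⟩ := BentAux.Qex k m hk
  refine ⟨BentAux.join BentAux.f0 qm, BentAux.join BentAux.q6 qm,
    BentAux.bent_join ⟨3, rfl⟩ ⟨k, hk⟩ BentAux.f0_bent qmb,
    BentAux.bent_join ⟨3, rfl⟩ ⟨k, hk⟩ BentAux.q6_bent qmb, ?_, ?_⟩
  · -- not EA-equivalent
    intro hEA
    have hK := BentAux.EA_Kinv hEA
    have hz : BentAux.Kinv (BentAux.join BentAux.q6 qm) = 0 := by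
      unfold BentAux.Kinv
      rw [Finset.card_eq_zero, Finset.filter_eq_empty_iff]
      rintro ⟨a, b, c⟩ -
      intro hall
      have h0 := hall 0
      rw [BentAux.d3_join, BentAux.q6_d3, qmd, add_zero] at h0
      exact absurd h0 (by decide)
    have hnz : BentAux.Kinv (BentAux.join BentAux.f0 qm) ≠ 0 := by
      unfold BentAux.Kinv
      apply Finset.card_ne_zero_of_mem
        (a := (Fin.append ![1,0,0,0,0,0] (0 : BV m),
               Fin.append ![0,1,0,0,0,0] (0 : BV m),
               Fin.append ![0,0,1,0,0,0] (0 : BV m)))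
      simp only [Finset.mem_filter, Finset.mem_univ, true_and]
      intro x
      rw [BentAux.d3_join, BentAux.lpart_append, BentAux.lpart_append, BentAux.lpart_append,
        qmd, add_zero]
      exact BentAux.cert (BentAux.lpart x)
    exact hnz (hK.trans hz)
  · -- design isomorphism
    refine ⟨BentAux.bigP, BentAux.bigP, BentAux.bigP_bij, BentAux.bigP_bij, ?_⟩
    intro p q
    show BentAux.join BentAux.f0 qm (BentAux.bigLam p.1 + BentAux.bigLam q.1) =
        (p.2 + BentAux.s6 (BentAux.lpart p.1)) + (q.2 + BentAux.s6 (BentAux.lpart q.1)) ↔ _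
    rw [BentAux.join_bigLam]
    exact BentAux.scalarIff _ _ _ _ _
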